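/- Let n be an odd positive integer and for q = 1,2,3 let α₁q, α₂q, α₃q be integers, each triple satisfying conditions (2.9), and assume the determinant d₃ of the 3×3 matrix (αₚq) satisfies gcd(d₃,n) = 1. Define M : (ZMod n)³ → ℕ by M(i,j,k) = n²·C⁽¹⁾(i,j,k).val + n·C⁽²⁾(i,j,k).val + C⁽³⁾(i,j,k).val, where C⁽q⁾(i,j,k) = α₁q·i + α₂q·j + α₃q·k in ZMod n and .val denotes the canonical representative in {0,...,n−1}. Then M is a pandiagonal magic cube: (a) M is injective and every value of M lies in {0, 1, ..., n³−1} (so M is a bijection onto {0,...,n³−1}); and (b) for every direction vector d ∈ {−1,0,1}³ with d ≠ 0 and every point p ∈ (ZMod n)³, the sum over t ∈ ZMod n of M(p + t·d) equals n(n³−1)/2. -/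

import Mathlib

/-- Conditions (2.9) on the parameters `α₁, α₂, α₃` of a linear cube modulo `n`,
with `A = α₁ + α₂ + α₃`. -/
def Cond29 (n : ℕ) (α₁ α₂ α₃ : ℤ) : Prop :=
  Int.gcd α₁ n = 1 ∧ Int.gcd α₂ n = 1 ∧ Int.gcd α₃ n = 1 ∧
  Int.gcd (α₁ + α₂) n = 1 ∧ Int.gcd (α₁ + α₃) n = 1 ∧ Int.gcd (α₂ + α₃) n = 1 ∧
  Int.gcd (α₁ - α₂) n = 1 ∧ Int.gcd (α₁ - α₃) n = 1 ∧ Int.gcd (α₂ - α₃) n = 1 ∧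
  Int.gcd (α₁ + α₂ + α₃) n = 1 ∧
  Int.gcd (α₁ + α₂ + α₃ - 2 * α₁) n = 1 ∧
  Int.gcd (α₁ + α₂ + α₃ - 2 * α₂) n = 1 ∧
  Int.gcd (α₁ + α₂ + α₃ - 2 * α₃) n = 1

lemma int_gcd_neg' (a : ℤ) (n : ℕ) : Int.gcd (-a) n = Int.gcd a n := by
  simp [Int.gcd]

lemma gcd_of_eq_or_neg {n : ℕ} {b : ℤ} (hb : Int.gcd b n = 1) {a : ℤ}
    (h : a = b ∨ a = -b) : Int.gcd a n = 1 := by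
  rcases h with rfl | rfl
  · exact hb
  · rwa [int_gcd_neg']

lemma coef_coprime (n : ℕ) (α₁ α₂ α₃ : ℤ) (h : Cond29 n α₁ α₂ α₃)
    (e₁ e₂ e₃ : ℤ) (h1 : e₁ = -1 ∨ e₁ = 0 ∨ e₁ = 1)
    (h2 : e₂ = -1 ∨ e₂ = 0 ∨ e₂ = 1) (h3 : e₃ = -1 ∨ e₃ = 0 ∨ e₃ = 1)
    (hne : ¬ (e₁ = 0 ∧ e₂ = 0 ∧ e₃ = 0)) :
    Int.gcd (e₁ * α₁ + e₂ * α₂ + e₃ * α₃) n = 1 := by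
  obtain ⟨g1, g2, g3, g4, g5, g6, g7, g8, g9, g10, g11, g12, g13⟩ := h
  rcases h1 with rfl | rfl | rfl <;> rcases h2 with rfl | rfl | rfl <;>
    rcases h3 with rfl | rfl | rfl <;>
  first
    | (exfalso; apply hne; refine ⟨rfl, rfl, rfl⟩)
    | (refine gcd_of_eq_or_neg g1 ?_; first | (left; ring1) | (right; ring1))
    | (refine gcd_of_eq_or_neg g2 ?_; first | (left; ring1) | (right; ring1))
    | (refine gcd_of_eq_or_neg g3 ?_; first | (left; ring1) | (right; ring1))
    | (refine gcd_of_eq_or_neg g4 ?_; first | (left; ring1) | (right; ring1))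
    | (refine gcd_of_eq_or_neg g5 ?_; first | (left; ring1) | (right; ring1))
    | (refine gcd_of_eq_or_neg g6 ?_; first | (left; ring1) | (right; ring1))
    | (refine gcd_of_eq_or_neg g7 ?_; first | (left; ring1) | (right; ring1))
    | (refine gcd_of_eq_or_neg g8 ?_; first | (left; ring1) | (right; ring1))
    | (refine gcd_of_eq_or_neg g9 ?_; first | (left; ring1) | (right; ring1))
    | (refine gcd_of_eq_or_neg g10 ?_; first | (left; ring1) | (right; ring1))
    | (refine gcd_of_eq_or_neg g11 ?_; first | (left; ring1) | (right; ring1))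
    | (refine gcd_of_eq_or_neg g12 ?_; first | (left; ring1) | (right; ring1))
    | (refine gcd_of_eq_or_neg g13 ?_; first | (left; ring1) | (right; ring1))

lemma isUnit_intCast_of_gcd {n : ℕ} {β : ℤ} (h : Int.gcd β n = 1) :
    IsUnit ((β : ℤ) : ZMod n) := by
  obtain ⟨u, v, huv⟩ := Int.isCoprime_iff_gcd_eq_one.mpr h
  refine IsUnit.of_mul_eq_one ((u : ℤ) : ZMod n) ?_
  have : ((u * β + v * n : ℤ) : ZMod n) = 1 := by rw [huv]; simp
  push_cast at this
  rw [ZMod.natCast_self] at this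
  rw [mul_comm]
  linear_combination this

lemma sum_val_affine (n : ℕ) [NeZero n] (β : ℤ) (h : Int.gcd β n = 1) (c : ZMod n) :
    ∑ t : ZMod n, (c + (β : ZMod n) * t).val = ∑ x : ZMod n, x.val := by
  have hu : IsUnit ((β : ℤ) : ZMod n) := isUnit_intCast_of_gcd h
  have hbij : Function.Bijective (fun t : ZMod n => c + (β : ZMod n) * t) := by
    apply Finite.injective_iff_bijective.mp
    intro a b hab
    exact hu.mul_left_cancel (add_left_cancel hab)
  exact hbij.sum_comp (fun x => x.val)

lemma sum_zmod_val (n : ℕ) [NeZero n] : ∑ x : ZMod n, x.val = ∑ i ∈ Finset.range n, i := by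
  refine Finset.sum_nbij' (fun x => x.val) (fun i => (i : ZMod n)) ?_ ?_ ?_ ?_ ?_
  · intro a _; exact Finset.mem_range.mpr (ZMod.val_lt a)
  · intro a _; exact Finset.mem_univ _
  · intro a _; exact ZMod.natCast_zmod_val a
  · intro a ha; exact ZMod.val_cast_of_lt (Finset.mem_range.mp ha)
  · intro a _; rfl

lemma two_digit {n b b' Q Q' : ℕ} (hn : 0 < n) (hb : b < n) (hb' : b' < n)
    (h : n * Q + b = n * Q' + b') : Q = Q' ∧ b = b' := by
  have hbb : b = b' := by
    have h1 : (n * Q + b) % n = b := by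
      rw [Nat.mul_add_mod]; exact Nat.mod_eq_of_lt hb
    have h2 : (n * Q' + b') % n = b' := by
      rw [Nat.mul_add_mod]; exact Nat.mod_eq_of_lt hb'
    rw [← h1, h, h2]
  subst hbb
  have : n * Q = n * Q' := by omega
  exact ⟨Nat.eq_of_mul_eq_mul_left hn this, rfl⟩

/-- **Theorem 3.2.** For odd `n`, three triples `(α₁q,α₂q,α₃q)` each
satisfying conditions (2.9) with determinant coprime to `n`, the array
`M = n²·C⁽¹⁾.val + n·C⁽²⁾.val + C⁽³⁾.val` (with `C⁽q⁾(i,j,k) = α₁q·i + α₂q·j + α₃q·k`)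
is a pandiagonal magic cube: a bijection onto `{0, …, n³-1}` in which every line with
direction a nonzero vector in `{-1,0,1}³` sums to `n(n³-1)/2`. -/
theorem magic_pandiagonal_cube
    (n : ℕ) (hodd : Odd n) [NeZero n] (α : Fin 3 → Fin 3 → ℤ)
    (hc : ∀ q : Fin 3, Cond29 n (α 0 q) (α 1 q) (α 2 q))
    (hdet : Int.gcd (Matrix.det (Matrix.of fun p q : Fin 3 => α p q)) n = 1)
    (C : Fin 3 → ZMod n → ZMod n → ZMod n → ZMod n)
    (hC : ∀ q i j k, C q i j k =
      (α 0 q : ZMod n) * i + (α 1 q : ZMod n) * j + (α 2 q : ZMod n) * k)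
    (M : ZMod n → ZMod n → ZMod n → ℕ)
    (hM : ∀ i j k, M i j k =
      n ^ 2 * (C 0 i j k).val + n * (C 1 i j k).val + (C 2 i j k).val) :
    (Function.Injective fun v : ZMod n × ZMod n × ZMod n => M v.1 v.2.1 v.2.2) ∧
    (∀ i j k : ZMod n, M i j k < n ^ 3) ∧
    (∀ d₁ d₂ d₃ : ZMod n,
      d₁ ∈ ({-1, 0, 1} : Set (ZMod n)) →
      d₂ ∈ ({-1, 0, 1} : Set (ZMod n)) →
      d₃ ∈ ({-1, 0, 1} : Set (ZMod n)) →
      ¬ (d₁ = 0 ∧ d₂ = 0 ∧ d₃ = 0) →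
      ∀ p₁ p₂ p₃ : ZMod n,
        ∑ t : ZMod n, M (p₁ + t * d₁) (p₂ + t * d₂) (p₃ + t * d₃) =
          n * (n ^ 3 - 1) / 2) := by
  have hn : 0 < n := Nat.pos_of_ne_zero (NeZero.ne n)
  -- the matrix of the linear map (i,j,k) ↦ (C 0, C 1, C 2)
  set A : Matrix (Fin 3) (Fin 3) (ZMod n) :=
    Matrix.of (fun q l : Fin 3 => ((α l q : ℤ) : ZMod n)) with hA
  have hAdet : IsUnit A.det := by
    have h2 : A.det = (((Matrix.of fun p q : Fin 3 => α p q).det : ℤ) : ZMod n) := by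
      have hmap := (Int.castRingHom (ZMod n)).map_det
        (Matrix.transpose (Matrix.of fun p q : Fin 3 => α p q))
      rw [Matrix.det_transpose] at hmap
      have hAe : A = (Int.castRingHom (ZMod n)).mapMatrix
          (Matrix.transpose (Matrix.of fun p q : Fin 3 => α p q)) := by
        ext q l; rfl
      rw [hAe]
      exact hmap.symm
    rw [h2]
    exact isUnit_intCast_of_gcd hdet
  have hmulVec : ∀ (i j k : ZMod n) (q : Fin 3),
      A.mulVec ![i, j, k] q = C q i j k := by
    intro i j k q
    rw [hC]
    simp [Matrix.mulVec, dotProduct, Fin.sum_univ_three, hA]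
  have hAinj : Function.Injective A.mulVec := by
    intro x y hxy
    have := congrArg (fun v => A⁻¹.mulVec v) hxy
    simpa [Matrix.mulVec_mulVec, Matrix.nonsing_inv_mul A hAdet] using this
  refine ⟨?_, ?_, ?_⟩
  · -- injectivity
    rintro ⟨i, j, k⟩ ⟨i', j', k'⟩ h
    simp only at h
    rw [hM, hM] at h
    have hv : ∀ q (i j k : ZMod n), (C q i j k).val < n := fun _ _ _ _ => ZMod.val_lt _
    have h1 : n * (n * (C 0 i j k).val + (C 1 i j k).val) + (C 2 i j k).val
        = n * (n * (C 0 i' j' k').val + (C 1 i' j' k').val) + (C 2 i' j' k').val := by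
      have e1 : ∀ a b c : ℕ, n ^ 2 * a + n * b + c = n * (n * a + b) + c := by
        intro a b c; ring
      rw [e1, e1] at h; exact h
    obtain ⟨hQ, h3⟩ := two_digit hn (ZMod.val_lt _) (ZMod.val_lt _) h1
    obtain ⟨h1', h2'⟩ := two_digit hn (ZMod.val_lt _) (ZMod.val_lt _) hQ
    have hCeq : ∀ q : Fin 3, C q i j k = C q i' j' k' := by
      intro q
      fin_cases q
      · exact ZMod.val_injective n h1'
      · exact ZMod.val_injective n h2'
      · exact ZMod.val_injective n h3
    have hvec : A.mulVec ![i, j, k] = A.mulVec ![i', j', k'] := by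
      funext q
      rw [hmulVec, hmulVec, hCeq]
    have := hAinj hvec
    have e0 := congrFun this 0
    have e1 := congrFun this 1
    have e2 := congrFun this 2
    simp only [Matrix.cons_val_zero, Matrix.cons_val_one, Matrix.head_cons,
      Matrix.cons_val_two, Matrix.tail_cons] at e0 e1 e2
    exact Prod.ext e0 (Prod.ext e1 e2)
  · -- bound
    intro i j k
    rw [hM]
    have h0 : (C 0 i j k).val < n := ZMod.val_lt _
    have h1 : (C 1 i j k).val < n := ZMod.val_lt _
    have h2 : (C 2 i j k).val < n := ZMod.val_lt _
    calc n ^ 2 * (C 0 i j k).val + n * (C 1 i j k).val + (C 2 i j k).val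
        ≤ n ^ 2 * (n - 1) + n * (n - 1) + (n - 1) := by
          gcongr <;> omega
      _ < n ^ 3 := by
          obtain ⟨m, rfl⟩ := hodd
          have hsub : 2 * m + 1 - 1 = 2 * m := by omega
          rw [hsub]
          have hx : (2 * m + 1) ^ 3
              = (2 * m + 1) ^ 2 * (2 * m) + (2 * m + 1) * (2 * m) + 2 * m + 1 := by ring
          linarith
  · -- magic sums
    intro d₁ d₂ d₃ hd₁ hd₂ hd₃ hne p₁ p₂ p₃
    have pick : ∀ d : ZMod n, d ∈ ({-1, 0, 1} : Set (ZMod n)) →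
        ∃ e : ℤ, (e = -1 ∨ e = 0 ∨ e = 1) ∧ ((e : ℤ) : ZMod n) = d ∧ (e = 0 → d = 0) := by
      rintro d hd
      simp only [Set.mem_insert_iff, Set.mem_singleton_iff] at hd
      rcases hd with rfl | rfl | rfl
      · exact ⟨-1, Or.inl rfl, by push_cast; ring, fun h => absurd h (by norm_num)⟩
      · exact ⟨0, Or.inr (Or.inl rfl), by push_cast; ring, fun _ => rfl⟩
      · exact ⟨1, Or.inr (Or.inr rfl), by push_cast; ring, fun h => absurd h (by norm_num)⟩
    obtain ⟨e₁, he₁m, he₁, he₁0⟩ := pick d₁ hd₁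
    obtain ⟨e₂, he₂m, he₂, he₂0⟩ := pick d₂ hd₂
    obtain ⟨e₃, he₃m, he₃, he₃0⟩ := pick d₃ hd₃
    have hene : ¬ (e₁ = 0 ∧ e₂ = 0 ∧ e₃ = 0) := by
      rintro ⟨z1, z2, z3⟩
      exact hne ⟨he₁0 z1, he₂0 z2, he₃0 z3⟩
    set S : ℕ := ∑ x : ZMod n, x.val with hS
    have key : ∀ q : Fin 3,
        ∑ t : ZMod n, (C q (p₁ + t * d₁) (p₂ + t * d₂) (p₃ + t * d₃)).val = S := by
      intro q
      have hβ : Int.gcd (e₁ * α 0 q + e₂ * α 1 q + e₃ * α 2 q) n = 1 :=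
        coef_coprime n (α 0 q) (α 1 q) (α 2 q) (hc q) e₁ e₂ e₃ he₁m he₂m he₃m hene
      have hrw : ∀ t : ZMod n, C q (p₁ + t * d₁) (p₂ + t * d₂) (p₃ + t * d₃)
          = C q p₁ p₂ p₃ + ((e₁ * α 0 q + e₂ * α 1 q + e₃ * α 2 q : ℤ) : ZMod n) * t := by
        intro t
        rw [hC, hC, ← he₁, ← he₂, ← he₃]
        push_cast
        ring
      calc ∑ t : ZMod n, (C q (p₁ + t * d₁) (p₂ + t * d₂) (p₃ + t * d₃)).val
          = ∑ t : ZMod n, (C q p₁ p₂ p₃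
              + ((e₁ * α 0 q + e₂ * α 1 q + e₃ * α 2 q : ℤ) : ZMod n) * t).val := by
            exact Finset.sum_congr rfl fun t _ => by rw [hrw]
        _ = S := sum_val_affine n _ hβ _
    have hsum : ∑ t : ZMod n, M (p₁ + t * d₁) (p₂ + t * d₂) (p₃ + t * d₃)
        = n ^ 2 * S + n * S + S := by
      calc ∑ t : ZMod n, M (p₁ + t * d₁) (p₂ + t * d₂) (p₃ + t * d₃)
          = ∑ t : ZMod n, (n ^ 2 * (C 0 (p₁ + t * d₁) (p₂ + t * d₂) (p₃ + t * d₃)).val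
              + n * (C 1 (p₁ + t * d₁) (p₂ + t * d₂) (p₃ + t * d₃)).val
              + (C 2 (p₁ + t * d₁) (p₂ + t * d₂) (p₃ + t * d₃)).val) := by
            exact Finset.sum_congr rfl fun t _ => hM _ _ _
        _ = n ^ 2 * S + n * S + S := by
            rw [Finset.sum_add_distrib, Finset.sum_add_distrib,
              ← Finset.mul_sum, ← Finset.mul_sum, key 0, key 1, key 2]
    rw [hsum]
    -- arithmetic: (n² + n + 1) S = n (n³ - 1)/2 with 2S = n(n-1)
    obtain ⟨m, rfl⟩ := hodd
    have h2S : S * 2 = (2 * m + 1) * (2 * m) := by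
      have hsub1 : 2 * m + 1 - 1 = 2 * m := by omega
      rw [hS, sum_zmod_val, Finset.sum_range_id_mul_two, hsub1]
    have hSval : S = (2 * m + 1) * m := by
      have : S * 2 = ((2 * m + 1) * m) * 2 := by rw [h2S]; ring
      omega
    have hcube : (2 * m + 1) ^ 3 - 1 = 2 * (4 * m ^ 3 + 6 * m ^ 2 + 3 * m) := by
      have : (2 * m + 1) ^ 3 = 2 * (4 * m ^ 3 + 6 * m ^ 2 + 3 * m) + 1 := by ring
      omega
    rw [hcube, hSval]
    have : (2 * m + 1) * (2 * (4 * m ^ 3 + 6 * m ^ 2 + 3 * m))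
        = ((2 * m + 1) * (4 * m ^ 3 + 6 * m ^ 2 + 3 * m)) * 2 := by ring
    rw [this, Nat.mul_div_cancel _ (by norm_num : 0 < 2)]
    try ring
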